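/- Let q be a prime power, let b, n, N, w be positive integers with b ≤ n, and let φ : F_q^b → F_q^N be an F_q-linear map such that wt_H(φ(a)) = w for every nonzero a ∈ F_q^b. For c = (c_0, …, c_{n-1}) ∈ F_q^n, write c̄_i = (c_i, c_{i+1}, …, c_{i+b-1}) ∈ F_q^b with subscripts modulo n, for each i ∈ {0, …, n-1}. Then the concatenated vector (φ(c̄_0), φ(c̄_1), …, φ(c̄_{n-1})) ∈ F_q^{Nn} has Hamming weight exactly w · wt_b(c). -/
import Mathlib


/-- The `b`-symbol weight of a vector `c ∈ F^n` (coordinates indexed cyclically by `ZMod n`). -/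
noncomputable def bWt {n : ℕ} {F : Type*} [Zero F] (b : ℕ) (c : ZMod n → F) : ℕ :=
  Nat.card {i : ZMod n | ∃ j < b, c (i + (j : ZMod n)) ≠ 0}

/-- The Hamming weight of a vector: its number of nonzero coordinates. -/
noncomputable def hWt {ι : Type*} {F : Type*} [Zero F] (u : ι → F) : ℕ :=
  Nat.card {i : ι | u i ≠ 0}

/-- If `φ : F_q^b → F_q^N` is linear with `wt_H(φ(a)) = w` for all nonzero `a`, then the
concatenated vector `(φ(c̄_0), …, φ(c̄_{n-1}))` has Hamming weight exactly `w · wt_b(c)`. -/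
theorem stmt2 (q b n N w : ℕ) (hb : 0 < b) (hbn : b ≤ n) (hN : 0 < N) (hw : 0 < w)
    (F : Type*) [Field F] [Fintype F] (hF : Fintype.card F = q)
    (φ : (Fin b → F) →ₗ[F] (Fin N → F))
    (hφ : ∀ a : Fin b → F, a ≠ 0 → hWt (φ a) = w)
    (c : ZMod n → F) :
    hWt (fun p : ZMod n × Fin N =>
        φ (fun j : Fin b => c (p.1 + ((j : ℕ) : ZMod n))) p.2)
      = w * bWt b c := by
  classical
  haveI : NeZero n := ⟨by omega⟩
  set f : ZMod n → Fin b → F := fun i j => c (i + ((j : ℕ) : ZMod n)) with hf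
  have key : ∀ i : ZMod n,
      Fintype.card {k : Fin N // φ (f i) k ≠ 0}
        = if ∃ j < b, c (i + (j : ZMod n)) ≠ 0 then w else 0 := by
    intro i
    by_cases h : ∃ j < b, c (i + (j : ZMod n)) ≠ 0
    · rw [if_pos h]
      have hfi : f i ≠ 0 := by
        obtain ⟨j, hj, hcj⟩ := h
        intro h0
        exact hcj (by simpa [hf] using congrFun h0 ⟨j, hj⟩)
      have := hφ (f i) hfi
      rw [← this, hWt, Nat.card_eq_fintype_card]
      rfl
    · rw [if_neg h]
      have hfi : f i = 0 := by
        funext j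
        by_contra hj
        exact h ⟨(j : ℕ), j.isLt, by simpa [hf] using hj⟩
      rw [hfi, map_zero]
      simp
  have e := Equiv.subtypeProdEquivSigmaSubtype
    (fun (i : ZMod n) (k : Fin N) => φ (f i) k ≠ 0)
  rw [hWt]
  rw [Nat.card_eq_fintype_card]
  have hcard : Fintype.card {p : ZMod n × Fin N //
      φ (fun j : Fin b => c (p.1 + ((j : ℕ) : ZMod n))) p.2 ≠ 0}
      = ∑ i : ZMod n, Fintype.card {k : Fin N // φ (f i) k ≠ 0} := by
    rw [Fintype.card_congr e, Fintype.card_sigma]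
  refine hcard.trans ?_
  simp only [key]
  rw [← Finset.sum_filter, Finset.sum_const, smul_eq_mul, mul_comm,
    bWt, Nat.card_eq_fintype_card, Fintype.card_subtype]
  rfl
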